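/- arXiv:2101.08364 — 8 statements merged into one kernel-verified Lean document; each statement's English description precedes it below -/
import Mathlib

section
/- Hindley's strong postponement lemma: for any relations e→ and i→ on a set A, if strong postponement SP(e→, i→) holds (i.e. i→ · e→ ⊆ e→* · i→=), then e-factorization F(e→, i→) holds (i.e. (e→ ∪ i→)* ⊆ e→* · i→*). -/
open Relation

/-- `i · e* ⊆ e* · i=` -/
private lemma hsp_aux1 {A : Type*} (e i : A → A → Prop)
    (SP : ∀ t u s, i t u → e u s →
      Relation.Comp (Relation.ReflTransGen e) (Relation.ReflGen i) t s) :
    ∀ u s, Relation.ReflTransGen e u s → ∀ t, i t u →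
      Relation.Comp (Relation.ReflTransGen e) (Relation.ReflGen i) t s := by
  intro u s h
  induction h using Relation.ReflTransGen.head_induction_on with
  | refl => intro t ht; exact ⟨t, ReflTransGen.refl, ReflGen.single ht⟩
  | head huv hvs ih =>
    intro t ht
    obtain ⟨w, hw1, hw2⟩ := SP t _ _ ht huv
    cases hw2 with
    | refl => exact ⟨s, hw1.trans hvs, ReflGen.refl⟩
    | single hwi =>
      obtain ⟨x, hx1, hx2⟩ := ih w hwi
      exact ⟨x, hw1.trans hx1, hx2⟩

/-- `i* · e ⊆ e* · i*` -/
private lemma hsp_aux2 {A : Type*} (e i : A → A → Prop)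
    (SP : ∀ t u s, i t u → e u s →
      Relation.Comp (Relation.ReflTransGen e) (Relation.ReflGen i) t s) :
    ∀ t u, Relation.ReflTransGen i t u → ∀ s, e u s →
      Relation.Comp (Relation.ReflTransGen e) (Relation.ReflTransGen i) t s := by
  intro t u h
  induction h using Relation.ReflTransGen.head_induction_on with
  | refl => intro s hs; exact ⟨s, ReflTransGen.single hs, ReflTransGen.refl⟩
  | head htc hcu ih =>
    intro s hs
    obtain ⟨v, hv1, hv2⟩ := ih s hs
    obtain ⟨w, hw1, hw2⟩ := hsp_aux1 e i SP _ v hv1 _ htc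
    exact ⟨w, hw1, hw2.to_reflTransGen.trans hv2⟩

/-- Hindley's strong postponement lemma: if `i→ · e→ ⊆ e→* · i→=`
(strong postponement `SP(e→, i→)`), then e-factorization `F(e→, i→)` holds:
`(e→ ∪ i→)* ⊆ e→* · i→*`. -/
theorem hindley_strong_postponement {A : Type*} (e i : A → A → Prop)
    (SP : ∀ t u s, i t u → e u s →
      Relation.Comp (Relation.ReflTransGen e) (Relation.ReflGen i) t s) :
    ∀ t s, Relation.ReflTransGen (fun a b => e a b ∨ i a b) t s →
      Relation.Comp (Relation.ReflTransGen e) (Relation.ReflTransGen i) t s := by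
  intro t s h
  induction h with
  | refl => exact ⟨t, ReflTransGen.refl, ReflTransGen.refl⟩
  | tail _ hus ih =>
    obtain ⟨c, hc1, hc2⟩ := ih
    cases hus with
    | inl he =>
      obtain ⟨w, hw1, hw2⟩ := hsp_aux2 e i SP _ _ hc2 _ he
      exact ⟨w, hc1.trans hw1, hw2⟩
    | inr hi => exact ⟨c, hc1, hc2.tail hi⟩
end

section
/- Characterization of factorization: for relations e→ and i→ on a set A, e-factorization F(e→, i→) holds if and only if there is a relation i⇒ on A such that i⇒* = i→* and strong postponement SP(e→, i⇒) holds. -/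
/-- Pushing one `ip` step past a sequence of `e` steps, given strong postponement. -/
private lemma sp_push {A : Type*} {e ip : A → A → Prop}
    (SP : ∀ t u s, ip t u → e u s →
      Relation.Comp (Relation.ReflTransGen e) (Relation.ReflGen ip) t s)
    {t v w : A} (h : ip t v) (hw : Relation.ReflTransGen e v w) :
    Relation.Comp (Relation.ReflTransGen e) (Relation.ReflGen ip) t w := by
  induction hw using Relation.ReflTransGen.head_induction_on generalizing t with
  | refl => exact ⟨t, Relation.ReflTransGen.refl, Relation.ReflGen.single h⟩
  | head hvx hxw ih =>
    obtain ⟨y, hty, hyx⟩ := SP _ _ _ h hvx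
    cases hyx with
    | refl => exact ⟨_, hty.trans hxw, Relation.ReflGen.refl⟩
    | single hyx =>
      obtain ⟨z, hyz, hzw⟩ := ih hyx
      exact ⟨z, hty.trans hyz, hzw⟩

/-- Pushing many `ip` steps past one `e` step. -/
private lemma sp_push_many {A : Type*} {e ip : A → A → Prop}
    (SP : ∀ t u s, ip t u → e u s →
      Relation.Comp (Relation.ReflTransGen e) (Relation.ReflGen ip) t s)
    {t u s : A} (h : Relation.ReflTransGen ip t u) (he : e u s) :
    Relation.Comp (Relation.ReflTransGen e) (Relation.ReflTransGen ip) t s := by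
  induction h using Relation.ReflTransGen.head_induction_on with
  | refl => exact ⟨s, Relation.ReflTransGen.single he, Relation.ReflTransGen.refl⟩
  | head htv hvu ih =>
    obtain ⟨w, hvw, hws⟩ := ih
    obtain ⟨z, htz, hzw⟩ := sp_push SP htv hvw
    exact ⟨z, htz, hzw.to_reflTransGen.trans hws⟩

/-- Characterization of factorization: e-factorization `F(e→, i→)` holds iff there is
a relation `i⇒` with `i⇒* = i→*` and strong postponement `SP(e→, i⇒)`. -/
theorem factorization_characterization {A : Type*} (e i : A → A → Prop) :
    (∀ t s, Relation.ReflTransGen (fun a b => e a b ∨ i a b) t s →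
        Relation.Comp (Relation.ReflTransGen e) (Relation.ReflTransGen i) t s)
    ↔
    (∃ ip : A → A → Prop,
      (∀ t s, Relation.ReflTransGen ip t s ↔ Relation.ReflTransGen i t s) ∧
      (∀ t u s, ip t u → e u s →
        Relation.Comp (Relation.ReflTransGen e) (Relation.ReflGen ip) t s)) := by
  constructor
  · intro F
    refine ⟨Relation.ReflTransGen i, ?_, ?_⟩
    · intro t s
      constructor
      · intro h
        induction h with
        | refl => exact Relation.ReflTransGen.refl
        | tail _ hbc ih => exact ih.trans hbc
      · exact Relation.ReflTransGen.single
    · intro t u s htu hus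
      have h1 : Relation.ReflTransGen (fun a b => e a b ∨ i a b) t s := by
        have : Relation.ReflTransGen (fun a b => e a b ∨ i a b) t u :=
          Relation.ReflTransGen.mono (fun a b h => Or.inr h) t u htu
        exact this.tail (Or.inl hus)
      obtain ⟨v, htv, hvs⟩ := F t s h1
      exact ⟨v, htv, Relation.ReflGen.single hvs⟩
  · rintro ⟨ip, hiff, SP⟩
    intro t s h
    induction h with
    | refl => exact ⟨t, Relation.ReflTransGen.refl, Relation.ReflTransGen.refl⟩
    | tail _ hbc ih =>
      obtain ⟨a, hta, hab⟩ := ih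
      rename_i b c _
      have hab' : Relation.ReflTransGen ip a b := (hiff a b).mpr hab
      cases hbc with
      | inl he =>
        obtain ⟨z, haz, hzc⟩ := sp_push_many SP hab' he
        exact ⟨z, hta.trans haz, (hiff z c).mp hzc⟩
      | inr hi => exact ⟨a, hta, hab.tail hi⟩
end

section
/- Normalization lemma: let → = e→ ∪ ¬e→ be a relation on a set A and let e→ be a strategy for → (i.e. e→ ⊆ → and e→ has the same normal forms as →). If (1) persistence holds: t ¬e→ t' implies t' is not →-normal, and (2) factorization holds: t →* u implies t e→* · ¬e→* u, then e→ is complete for → (t →* u with u →-normal implies t e→* u). If moreover (3) uniformity holds: every weakly e→-normalizing element is strongly e→-normalizing, then e→ is a normalizing strategy for → (whenever t →* u for some →-normal u, every maximal e→-sequence from t ends in a →-normal form). -/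
/-- `a` is `r`-normal: no `r`-step from `a`. -/
def IsNormal {A : Type*} (r : A → A → Prop) (a : A) : Prop := ∀ b, ¬ r a b

/-- `a` is strongly `r`-normalizing: every `r`-sequence from `a` is finite. -/
def StronglyNormalizing {A : Type*} (r : A → A → Prop) (a : A) : Prop :=
  Acc (fun x y => r y x) a

/-- Normalization lemma: let `→ = e→ ∪ ¬e→` and let `e→` be a strategy for `→`
(same normal forms). If persistence and factorization hold, then `e→` is complete;
if moreover uniformity holds, then `e→` is normalizing: from any `→`-normalizable `t`,
every maximal `e→`-sequence ends in a (`→`-)normal form (in particular it is finite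
and its e-normal endpoints are `→`-normal). -/
theorem normalization_lemma {A : Type*} (e ne r : A → A → Prop)
    (hsplit : ∀ a b, r a b ↔ e a b ∨ ne a b)
    (hstrategy : ∀ a, IsNormal e a ↔ IsNormal r a)
    (hpersist : ∀ t t', ne t t' → ¬ IsNormal r t')
    (hfact : ∀ t u, Relation.ReflTransGen r t u →
        Relation.Comp (Relation.ReflTransGen e) (Relation.ReflTransGen ne) t u) :
    (∀ t u, Relation.ReflTransGen r t u → IsNormal r u → Relation.ReflTransGen e t u)
    ∧
    ((∀ t, (∃ u, Relation.ReflTransGen e t u ∧ IsNormal e u) → StronglyNormalizing e t) →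
      ∀ t, (∃ u, Relation.ReflTransGen r t u ∧ IsNormal r u) →
        StronglyNormalizing e t ∧
        ∀ s, Relation.ReflTransGen e t s → IsNormal e s → IsNormal r s) := by
  have complete : ∀ t u, Relation.ReflTransGen r t u → IsNormal r u →
      Relation.ReflTransGen e t u := by
    intro t u htu hu
    obtain ⟨v, hev, hnev⟩ := hfact t u htu
    have hvu : v = u := by
      rcases (Relation.reflTransGen_iff_eq_or_transGen.mp hnev) with h | h
      · exact h.symm
      · cases h with
        | single hw => exact absurd hu (hpersist v u hw)
        | tail _ hw => exact absurd hu (hpersist _ u hw)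
    exact hvu ▸ hev
  refine ⟨complete, fun huniform t ⟨u, htu, hu⟩ => ?_⟩
  refine ⟨huniform t ⟨u, complete t u htu hu, (hstrategy u).mpr hu⟩, ?_⟩
  intro s _ hs
  exact (hstrategy s).mp hs
end

section
/- Modular factorization: let →1 = e→1 ∪ i→1 and →2 = e→2 ∪ i→2 be relations on a set A such that F(e→1, i→1) and F(e→2, i→2) hold. Set e→ := e→1 ∪ e→2 and i→ := i→1 ∪ i→2. If the linear swaps i→1 · e→2 ⊆ e→2 · →1* and i→2 · e→1 ⊆ e→1 · →2* hold, then the union →1 ∪ →2 fulfills factorization F(e→, i→). -/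
open Relation

/-- Lifted linear swap: `i1* · e2 ⊆ e2 · →1*`. -/
private lemma mf_aux1 {A : Type*} {e1 i1 e2 : A → A → Prop}
    (swap1 : ∀ t u s, i1 t u → e2 u s →
        Relation.Comp e2 (ReflTransGen (fun a b => e1 a b ∨ i1 a b)) t s) :
    ∀ t u s, ReflTransGen i1 t u → e2 u s →
      Relation.Comp e2 (ReflTransGen (fun a b => e1 a b ∨ i1 a b)) t s := by
  intro t u s h
  induction h using ReflTransGen.head_induction_on with
  | refl => exact fun he => ⟨s, he, ReflTransGen.refl⟩
  | head hstep _ ih =>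
      intro he
      obtain ⟨c, hc, hcs⟩ := ih he
      obtain ⟨d, hd, hdc⟩ := swap1 _ _ _ hstep hc
      exact ⟨d, hd, hdc.trans hcs⟩

/-- `→1* · e2 ⊆ e1* · e2 · →1*`. -/
private lemma mf_aux2 {A : Type*} {e1 i1 e2 : A → A → Prop}
    (F1 : ∀ t s, Relation.ReflTransGen (fun a b => e1 a b ∨ i1 a b) t s →
        Relation.Comp (Relation.ReflTransGen e1) (Relation.ReflTransGen i1) t s)
    (swap1 : ∀ t u s, i1 t u → e2 u s →
        Relation.Comp e2 (ReflTransGen (fun a b => e1 a b ∨ i1 a b)) t s) :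
    ∀ t u s, ReflTransGen (fun a b => e1 a b ∨ i1 a b) t u → e2 u s →
      Relation.Comp (ReflTransGen e1)
        (Relation.Comp e2 (ReflTransGen (fun a b => e1 a b ∨ i1 a b))) t s := by
  intro t u s h1 he
  obtain ⟨a, ha, hai⟩ := F1 _ _ h1
  exact ⟨a, ha, mf_aux1 swap1 _ _ _ hai he⟩

/-- `→1* · e* ⊆ e* · →1*` where `e ⊇ e1, e2` and `e ⊆ e1 ∪ e2`. -/
private lemma mf_aux3 {A : Type*} {e1 i1 e2 e : A → A → Prop}
    (he1 : ∀ a b, e1 a b → e a b) (he2 : ∀ a b, e2 a b → e a b)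
    (hsub : ∀ a b, e a b → e1 a b ∨ e2 a b)
    (F1 : ∀ t s, Relation.ReflTransGen (fun a b => e1 a b ∨ i1 a b) t s →
        Relation.Comp (Relation.ReflTransGen e1) (Relation.ReflTransGen i1) t s)
    (swap1 : ∀ t u s, i1 t u → e2 u s →
        Relation.Comp e2 (ReflTransGen (fun a b => e1 a b ∨ i1 a b)) t s) :
    ∀ u s, ReflTransGen e u s → ∀ t,
      ReflTransGen (fun a b => e1 a b ∨ i1 a b) t u →
      Relation.Comp (ReflTransGen e)
        (ReflTransGen (fun a b => e1 a b ∨ i1 a b)) t s := by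
  intro u s h
  induction h using ReflTransGen.head_induction_on with
  | refl => exact fun t h1 => ⟨t, ReflTransGen.refl, h1⟩
  | @head u v hstep _ ih =>
      intro t h1
      rcases hsub _ _ hstep with h' | h'
      · exact ih t (h1.trans (ReflTransGen.single (Or.inl h')))
      · obtain ⟨a, hae, b, hb, hbv⟩ := mf_aux2 F1 swap1 _ _ _ h1 h'
        obtain ⟨m, hm, hms⟩ := ih b hbv
        exact ⟨m, ((ReflTransGen.mono he1 _ _ hae).trans ((ReflTransGen.single (he2 _ _ hb)).trans hm)),
          hms⟩

/-- Modular factorization: if `→1 = e→1 ∪ i→1` and `→2 = e→2 ∪ i→2` both e-factorize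
and the linear swaps `i→1 · e→2 ⊆ e→2 · →1*` and `i→2 · e→1 ⊆ e→1 · →2*` hold, then
the union `→1 ∪ →2` fulfills factorization `F(e→1 ∪ e→2, i→1 ∪ i→2)`. -/
theorem modular_factorization {A : Type*} (e1 i1 e2 i2 : A → A → Prop)
    (F1 : ∀ t s, Relation.ReflTransGen (fun a b => e1 a b ∨ i1 a b) t s →
        Relation.Comp (Relation.ReflTransGen e1) (Relation.ReflTransGen i1) t s)
    (F2 : ∀ t s, Relation.ReflTransGen (fun a b => e2 a b ∨ i2 a b) t s →
        Relation.Comp (Relation.ReflTransGen e2) (Relation.ReflTransGen i2) t s)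
    (swap1 : ∀ t u s, i1 t u → e2 u s →
        Relation.Comp e2 (Relation.ReflTransGen (fun a b => e1 a b ∨ i1 a b)) t s)
    (swap2 : ∀ t u s, i2 t u → e1 u s →
        Relation.Comp e1 (Relation.ReflTransGen (fun a b => e2 a b ∨ i2 a b)) t s) :
    ∀ t s, Relation.ReflTransGen
        (fun a b => (e1 a b ∨ i1 a b) ∨ (e2 a b ∨ i2 a b)) t s →
      Relation.Comp (Relation.ReflTransGen (fun a b => e1 a b ∨ e2 a b))
        (Relation.ReflTransGen (fun a b => i1 a b ∨ i2 a b)) t s := by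
  intro t s h
  induction h using ReflTransGen.head_induction_on with
  | refl => exact ⟨s, ReflTransGen.refl, ReflTransGen.refl⟩
  | @head t u hstep _ ih =>
      obtain ⟨v, hev, hiv⟩ := ih
      rcases hstep with (h' | h') | (h' | h')
      · -- e1 step
        exact ⟨v, ReflTransGen.head (Or.inl h') hev, hiv⟩
      · -- i1 step
        obtain ⟨w, hew, hwv⟩ := mf_aux3 (e1 := e1) (i1 := i1) (e2 := e2)
          (fun a b h => Or.inl h) (fun a b h => Or.inr h) (fun a b h => h)
          F1 swap1 _ _ hev t (ReflTransGen.single (Or.inr h'))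
        obtain ⟨x, hx1, hx2⟩ := F1 _ _ hwv
        exact ⟨x, hew.trans (ReflTransGen.mono (fun a b h => Or.inl h) _ _ hx1),
          (ReflTransGen.mono (fun a b h => Or.inl h) _ _ hx2).trans hiv⟩
      · -- e2 step
        exact ⟨v, ReflTransGen.head (Or.inr h') hev, hiv⟩
      · -- i2 step
        obtain ⟨w, hew, hwv⟩ := mf_aux3 (e1 := e2) (i1 := i2) (e2 := e1)
          (fun a b h => Or.inr h) (fun a b h => Or.inl h)
          (fun a b h => h.symm) F2 swap2 _ _ hev t (ReflTransGen.single (Or.inr h'))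
        obtain ⟨x, hx1, hx2⟩ := F2 _ _ hwv
        exact ⟨x, hew.trans (ReflTransGen.mono (fun a b h => Or.inr h) _ _ hx1),
          (ReflTransGen.mono (fun a b h => Or.inr h) _ _ hx2).trans hiv⟩
end

section
/- Abstract factorization via parallel reductions: let → = e→ ∪ ¬e→ be a relation on a set A. Suppose there are relations ⇒ and ¬e⇒ on A such that (macro) ¬e→ ⊆ ¬e⇒ ⊆ ¬e→*, (merge) t ¬e⇒ · e→ s implies t ⇒ s, and (split) t ⇒ s implies t e→* · ¬e⇒ s. Then → e-factorizes: t →* s implies t e→* · ¬e→* s. -/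
/-- Abstract factorization via parallel reductions: let `→ = e→ ∪ ¬e→`.
If there are relations `⇒` (par) and `¬e⇒` (parin) satisfying macro, merge and
split, then `→` e-factorizes: `→* ⊆ e→* · ¬e→*`. -/
theorem abstract_factorization {A : Type*} (e ne par parin : A → A → Prop)
    (macro₁ : ∀ t s, ne t s → parin t s)
    (macro₂ : ∀ t s, parin t s → Relation.ReflTransGen ne t s)
    (merge : ∀ t s, Relation.Comp parin e t s → par t s)
    (split : ∀ t s, par t s → Relation.Comp (Relation.ReflTransGen e) parin t s) :
    ∀ t s, Relation.ReflTransGen (fun a b => e a b ∨ ne a b) t s →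
      Relation.Comp (Relation.ReflTransGen e) (Relation.ReflTransGen ne) t s := by
  -- push one parin across an e-chain
  have push1 : ∀ x y, Relation.ReflTransGen e x y → ∀ w, parin w x →
      ∃ z, Relation.ReflTransGen e w z ∧ parin z y := by
    intro x y h
    induction h using Relation.ReflTransGen.head_induction_on with
    | refl => exact fun w hw => ⟨w, Relation.ReflTransGen.refl, hw⟩
    | head hxx' _ ih =>
      intro w hw
      obtain ⟨m, hm1, hm2⟩ := split _ _ (merge _ _ ⟨_, hw, hxx'⟩)
      obtain ⟨z, hz1, hz2⟩ := ih m hm2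
      exact ⟨z, hm1.trans hz1, hz2⟩
  -- push a parin-chain across an e-chain
  have push : ∀ w u, Relation.ReflTransGen parin w u → ∀ v, Relation.ReflTransGen e u v →
      ∃ z, Relation.ReflTransGen e w z ∧ Relation.ReflTransGen parin z v := by
    intro w u h
    induction h using Relation.ReflTransGen.head_induction_on with
    | refl => exact fun v hv => ⟨v, hv, Relation.ReflTransGen.refl⟩
    | head hwx _ ih =>
      intro v hv
      obtain ⟨y, hy1, hy2⟩ := ih v hv
      obtain ⟨z, hz1, hz2⟩ := push1 _ _ hy1 _ hwx
      exact ⟨z, hz1, Relation.ReflTransGen.head hz2 hy2⟩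
  intro t s h
  suffices hS : ∃ m, Relation.ReflTransGen e t m ∧ Relation.ReflTransGen parin m s by
    obtain ⟨m, h1, h2⟩ := hS
    refine ⟨m, h1, ?_⟩
    exact Relation.ReflTransGen.trans_induction_on h2 (fun _ => .refl)
      (fun hp => macro₂ _ _ hp) (fun _ _ a b => a.trans b)
  induction h with
  | refl => exact ⟨t, .refl, .refl⟩
  | tail _ hstep ih =>
    obtain ⟨m, h1, h2⟩ := ih
    rcases hstep with he | hne
    · obtain ⟨z, hz1, hz2⟩ := push _ _ h2 _ (Relation.ReflTransGen.single he)
      exact ⟨z, h1.trans hz1, hz2⟩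
    · exact ⟨m, h1, h2.tail (macro₁ _ _ hne)⟩
end

section
/- Substitution lemma for the CbN and CbV translations: for all λ-terms t, u and every variable x, (1) t^n[u^n/x] = (t[u/x])^n; and (2) if u^v = !S for some bang-calculus term S (equivalently, u is a value), then t^v[S/x] = (t[u/x])^v. -/
namespace BangPaper

/-- λ-terms with operators `O`, each with arity `ar o`. -/
inductive Lam (O : Type) (ar : O → ℕ) : Type
  | var : ℕ → Lam O ar
  | lam : ℕ → Lam O ar → Lam O ar
  | app : Lam O ar → Lam O ar → Lam O ar
  | op  : (o : O) → (Fin (ar o) → Lam O ar) → Lam O ar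

/-- Terms of the bang calculus `Λ!O`. -/
inductive BT (O : Type) (ar : O → ℕ) : Type
  | var : ℕ → BT O ar
  | lam : ℕ → BT O ar → BT O ar
  | app : BT O ar → BT O ar → BT O ar
  | bang : BT O ar → BT O ar
  | op  : (o : O) → (Fin (ar o) → BT O ar) → BT O ar

variable {O : Type} {ar : O → ℕ}

/-- Values: variables and abstractions. -/
def Lam.isValue : Lam O ar → Prop
  | .var _ => True
  | .lam _ _ => True
  | _ => False

/-- Substitution `t[u/x]` on λ-terms. -/
def Lam.subst : Lam O ar → ℕ → Lam O ar → Lam O ar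
  | .var y, x, u => if y = x then u else .var y
  | .lam y t, x, u => if y = x then .lam y t else .lam y (Lam.subst t x u)
  | .app t s, x, u => .app (Lam.subst t x u) (Lam.subst s x u)
  | .op o ts, x, u => .op o (fun i => Lam.subst (ts i) x u)

/-- Substitution `T[S/x]` on bang-calculus terms. -/
def BT.subst : BT O ar → ℕ → BT O ar → BT O ar
  | .var y, x, u => if y = x then u else .var y
  | .lam y t, x, u => if y = x then .lam y t else .lam y (BT.subst t x u)
  | .app t s, x, u => .app (BT.subst t x u) (BT.subst s x u)
  | .bang t, x, u => .bang (BT.subst t x u)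
  | .op o ts, x, u => .op o (fun i => BT.subst (ts i) x u)

/-- One-hole contexts for λ-terms. -/
inductive LCtx (O : Type) (ar : O → ℕ) : Type
  | hole : LCtx O ar
  | lam  : ℕ → LCtx O ar → LCtx O ar
  | appL : LCtx O ar → Lam O ar → LCtx O ar
  | appR : Lam O ar → LCtx O ar → LCtx O ar
  | op   : (o : O) → (Fin (ar o) → Lam O ar) → Fin (ar o) → LCtx O ar → LCtx O ar

/-- One-hole contexts for bang-calculus terms. -/
inductive BCtx (O : Type) (ar : O → ℕ) : Type
  | hole : BCtx O ar
  | lam  : ℕ → BCtx O ar → BCtx O ar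
  | appL : BCtx O ar → BT O ar → BCtx O ar
  | appR : BT O ar → BCtx O ar → BCtx O ar
  | bang : BCtx O ar → BCtx O ar
  | op   : (o : O) → (Fin (ar o) → BT O ar) → Fin (ar o) → BCtx O ar → BCtx O ar

/-- Plugging a λ-term in a λ-context. -/
def LCtx.plug : LCtx O ar → Lam O ar → Lam O ar
  | .hole, t => t
  | .lam x c, t => .lam x (LCtx.plug c t)
  | .appL c s, t => .app (LCtx.plug c t) s
  | .appR s c, t => .app s (LCtx.plug c t)
  | .op o ts i c, t => .op o (Function.update ts i (LCtx.plug c t))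

/-- CbN level of a λ-context. -/
def LCtx.levN : LCtx O ar → ℕ
  | .hole => 0
  | .lam _ c => LCtx.levN c
  | .appL c _ => LCtx.levN c
  | .appR _ c => LCtx.levN c + 1
  | .op _ _ _ c => LCtx.levN c + 1

/-- CbV level of a λ-context. -/
def LCtx.levV : LCtx O ar → ℕ
  | .hole => 0
  | .lam _ c => LCtx.levV c + 1
  | .appL (.lam _ c') _ => LCtx.levV c'
  | .appL c _ => LCtx.levV c
  | .appR _ c => LCtx.levV c
  | .op _ _ _ c => LCtx.levV c + 1

/-- Plugging a bang-term in a bang-context. -/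
def BCtx.plug : BCtx O ar → BT O ar → BT O ar
  | .hole, t => t
  | .lam x c, t => .lam x (BCtx.plug c t)
  | .appL c s, t => .app (BCtx.plug c t) s
  | .appR s c, t => .app s (BCtx.plug c t)
  | .bang c, t => .bang (BCtx.plug c t)
  | .op o ts i c, t => .op o (Function.update ts i (BCtx.plug c t))

/-- Bang-calculus level of a context. -/
def BCtx.lev : BCtx O ar → ℕ
  | .hole => 0
  | .lam _ c => BCtx.lev c
  | .appL c _ => BCtx.lev c
  | .appR _ c => BCtx.lev c
  | .bang c => BCtx.lev c + 1
  | .op _ _ _ c => BCtx.lev c + 1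

/-- Contextual closure of a root rule on λ-terms. -/
def Lam.Step (root : Lam O ar → Lam O ar → Prop) (t s : Lam O ar) : Prop :=
  ∃ (c : LCtx O ar) (a b : Lam O ar), root a b ∧ t = c.plug a ∧ s = c.plug b

/-- Step at level `k` (w.r.t. a level function `lev` on λ-contexts). -/
def Lam.StepAt (lev : LCtx O ar → ℕ) (root : Lam O ar → Lam O ar → Prop)
    (k : ℕ) (t s : Lam O ar) : Prop :=
  ∃ (c : LCtx O ar) (a b : Lam O ar), root a b ∧ t = c.plug a ∧ s = c.plug b ∧ lev c = k

/-- Least level of a λ-term w.r.t. a redex set `Red` and level function `lev`. -/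
noncomputable def Lam.ll (lev : LCtx O ar → ℕ) (Red : Lam O ar → Prop) (t : Lam O ar) : ℕ∞ :=
  sInf { n : ℕ∞ | ∃ (c : LCtx O ar) (r : Lam O ar), Red r ∧ t = c.plug r ∧ (lev c : ℕ∞) = n }

/-- Least-level step. -/
def Lam.LLStep (lev : LCtx O ar → ℕ) (Red : Lam O ar → Prop)
    (root : Lam O ar → Lam O ar → Prop) (t s : Lam O ar) : Prop :=
  ∃ k : ℕ, Lam.StepAt lev root k t s ∧ (k : ℕ∞) = Lam.ll lev Red t

/-- Internal (non-least-level) step. -/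
def Lam.InStep (lev : LCtx O ar → ℕ) (Red : Lam O ar → Prop)
    (root : Lam O ar → Lam O ar → Prop) (t s : Lam O ar) : Prop :=
  ∃ k : ℕ, Lam.StepAt lev root k t s ∧ Lam.ll lev Red t < (k : ℕ∞)

/-- Contextual closure of a root rule on bang-terms. -/
def BT.Step (root : BT O ar → BT O ar → Prop) (t s : BT O ar) : Prop :=
  ∃ (c : BCtx O ar) (a b : BT O ar), root a b ∧ t = c.plug a ∧ s = c.plug b

/-- Step at level `k` in the bang calculus. -/
def BT.StepAt (root : BT O ar → BT O ar → Prop) (k : ℕ) (t s : BT O ar) : Prop :=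
  ∃ (c : BCtx O ar) (a b : BT O ar), root a b ∧ t = c.plug a ∧ s = c.plug b ∧ c.lev = k

/-- Least level of a bang-term w.r.t. a redex set `Red`. -/
noncomputable def BT.ll (Red : BT O ar → Prop) (t : BT O ar) : ℕ∞ :=
  sInf { n : ℕ∞ | ∃ (c : BCtx O ar) (r : BT O ar), Red r ∧ t = c.plug r ∧ (c.lev : ℕ∞) = n }

/-- Least-level step in the bang calculus. -/
def BT.LLStep (Red : BT O ar → Prop) (root : BT O ar → BT O ar → Prop)
    (t s : BT O ar) : Prop :=
  ∃ k : ℕ, BT.StepAt root k t s ∧ (k : ℕ∞) = BT.ll Red t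

/-- Internal (non-least-level) step in the bang calculus. -/
def BT.InStep (Red : BT O ar → Prop) (root : BT O ar → BT O ar → Prop)
    (t s : BT O ar) : Prop :=
  ∃ k : ℕ, BT.StepAt root k t s ∧ BT.ll Red t < (k : ℕ∞)

/-- β-rule: `(λx.t)s ↦β t[s/x]`. -/
def betaRoot : Lam O ar → Lam O ar → Prop := fun a b =>
  ∃ x t s, a = Lam.app (Lam.lam x t) s ∧ b = Lam.subst t x s

/-- β-redexes. -/
def betaRedex : Lam O ar → Prop := fun a => ∃ x t s, a = Lam.app (Lam.lam x t) s

/-- βv-rule: `(λx.t)V ↦βv t[V/x]` for `V` a value. -/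
def betavRoot : Lam O ar → Lam O ar → Prop := fun a b =>
  ∃ x t v, Lam.isValue v ∧ a = Lam.app (Lam.lam x t) v ∧ b = Lam.subst t x v

/-- βv-redexes. -/
def betavRedex : Lam O ar → Prop := fun a => ∃ x t v, Lam.isValue v ∧ a = Lam.app (Lam.lam x t) v

/-- !β-rule: `(λx.T)(!S) ↦!β T[S/x]`. -/
def bbetaRoot : BT O ar → BT O ar → Prop := fun a b =>
  ∃ x T S, a = BT.app (BT.lam x T) (BT.bang S) ∧ b = BT.subst T x S

/-- !β-redexes. -/
def bbetaRedex : BT O ar → Prop := fun a => ∃ x T S, a = BT.app (BT.lam x T) (BT.bang S)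

/-- `der := λx.x`. -/
def der : BT O ar := BT.lam 0 (BT.var 0)

/-- d-rule: `der(!T) ↦d T`. -/
def dRoot : BT O ar → BT O ar → Prop := fun a b => a = BT.app der (BT.bang b)

/-- CbN translation of λ-terms into the bang calculus. -/
def cbn : Lam O ar → BT O ar
  | .var x => .var x
  | .lam x t => .lam x (cbn t)
  | .app t s => .app (cbn t) (.bang (cbn s))
  | .op o ts => .op o (fun i => cbn (ts i))

/-- CbV translation of λ-terms into the bang calculus. -/
def cbv : Lam O ar → BT O ar
  | .var x => .bang (.var x)
  | .lam x t => .bang (.lam x (cbv t))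
  | .app t s =>
      match cbv t with
      | .bang T => .app T (cbv s)
      | T => .app (.app der T) (cbv s)
  | .op o ts => .op o (fun i => cbv (ts i))

/-- CbN translation of λ-contexts into bang-contexts. -/
def cbnCtx : LCtx O ar → BCtx O ar
  | .hole => .hole
  | .lam x c => .lam x (cbnCtx c)
  | .appL c t => .appL (cbnCtx c) (.bang (cbn t))
  | .appR t c => .appR (cbn t) (.bang (cbnCtx c))
  | .op o ts i c => .op o (fun j => cbn (ts j)) i (cbnCtx c)

/-- CbV translation of λ-contexts into bang-contexts. -/
def cbvCtx : LCtx O ar → BCtx O ar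
  | .hole => .hole
  | .lam x c => .bang (.lam x (cbvCtx c))
  | .appL c t =>
      match cbvCtx c with
      | .bang C => .appL C (cbv t)
      | C => .appL (.appR der C) (cbv t)
  | .appR t c =>
      match cbv t with
      | .bang T => .appR T (cbvCtx c)
      | T => .appR (.app der T) (cbvCtx c)
  | .op o ts i c => .op o (fun j => cbv (ts j)) i (cbvCtx c)

/-- `a` is `r`-normal: no `r`-step from `a`. -/
def Normal {α : Type*} (r : α → α → Prop) (a : α) : Prop := ∀ b, ¬ r a b

/-- `a` is strongly `r`-normalizing. -/
def SN {α : Type*} (r : α → α → Prop) (a : α) : Prop := Acc (fun x y => r y x) a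

/-- `e` is a normalizing strategy for `r`: it has the same normal forms as `r`, and
from every `r`-normalizable term every maximal `e`-sequence ends in a normal form
(i.e. it cannot be extended infinitely). -/
def NormalizingStrategy {α : Type*} (r e : α → α → Prop) : Prop :=
  (∀ a, Normal e a ↔ Normal r a) ∧
  ∀ t u, Relation.ReflTransGen r t u → Normal r u → SN e t

/-- Redex set of `→!β ∪ →O` for a family of operator rules. -/
def BT.RedSet (rules : O → BT O ar → BT O ar → Prop) : BT O ar → Prop :=
  fun A => bbetaRedex A ∨ ∃ o B, rules o A B

/-- Step at level `k` of the compound reduction `→!β ∪ →O`. -/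
def BT.FullAt (rules : O → BT O ar → BT O ar → Prop) (k : ℕ) (T S : BT O ar) : Prop :=
  BT.StepAt bbetaRoot k T S ∨ ∃ o, BT.StepAt (rules o) k T S

/-- The compound reduction `→!β ∪ →O` of the bang calculus. -/
def BT.Full (rules : O → BT O ar → BT O ar → Prop) (T S : BT O ar) : Prop :=
  ∃ k, BT.FullAt rules k T S

/-- Least-level step of `→!β ∪ →O`. -/
def BT.FullLL (rules : O → BT O ar → BT O ar → Prop) (T S : BT O ar) : Prop :=
  ∃ k : ℕ, BT.FullAt rules k T S ∧ (k : ℕ∞) = BT.ll (BT.RedSet rules) T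

/-- Internal step of `→!β ∪ →O`. -/
def BT.FullIn (rules : O → BT O ar → BT O ar → Prop) (T S : BT O ar) : Prop :=
  ∃ k : ℕ, BT.FullAt rules k T S ∧ BT.ll (BT.RedSet rules) T < (k : ℕ∞)

/-- Redex set of `→base ∪ →O` on λ-terms. -/
def Lam.RedSet (base : Lam O ar → Prop) (rules : O → Lam O ar → Lam O ar → Prop) :
    Lam O ar → Prop :=
  fun a => base a ∨ ∃ o b, rules o a b

/-- Step at level `k` of the compound reduction `→root ∪ →O` on λ-terms. -/
def Lam.FullAt (lev : LCtx O ar → ℕ) (root : Lam O ar → Lam O ar → Prop)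
    (rules : O → Lam O ar → Lam O ar → Prop) (k : ℕ) (t s : Lam O ar) : Prop :=
  Lam.StepAt lev root k t s ∨ ∃ o, Lam.StepAt lev (rules o) k t s

/-- Compound reduction `→root ∪ →O` on λ-terms. -/
def Lam.Full (lev : LCtx O ar → ℕ) (root : Lam O ar → Lam O ar → Prop)
    (rules : O → Lam O ar → Lam O ar → Prop) (t s : Lam O ar) : Prop :=
  ∃ k, Lam.FullAt lev root rules k t s

/-- Least-level step of the compound reduction on λ-terms. -/
def Lam.FullLL (lev : LCtx O ar → ℕ) (base : Lam O ar → Prop)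
    (root : Lam O ar → Lam O ar → Prop)
    (rules : O → Lam O ar → Lam O ar → Prop) (t s : Lam O ar) : Prop :=
  ∃ k : ℕ, Lam.FullAt lev root rules k t s ∧ (k : ℕ∞) = Lam.ll lev (Lam.RedSet base rules) t

/-- Internal step of the compound reduction on λ-terms. -/
def Lam.FullIn (lev : LCtx O ar → ℕ) (base : Lam O ar → Prop)
    (root : Lam O ar → Lam O ar → Prop)
    (rules : O → Lam O ar → Lam O ar → Prop) (t s : Lam O ar) : Prop :=
  ∃ k : ℕ, Lam.FullAt lev root rules k t s ∧ Lam.ll lev (Lam.RedSet base rules) t < (k : ℕ∞)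

lemma der_subst {O : Type} {ar : O → ℕ} (x : ℕ) (S : BT O ar) :
    BT.subst der x S = der := by
  simp only [der, BT.subst]
  split_ifs with h <;> simp [h, BT.subst]

/-- The CbV translation never produces a variable or a lambda at top level. -/
lemma cbv_shape {O : Type} {ar : O → ℕ} (t : Lam O ar) :
    (∃ T, cbv t = BT.bang T) ∨ (∃ A B, cbv t = BT.app A B) ∨
    (∃ o f, cbv t = BT.op o f) := by
  cases t with
  | var y => exact Or.inl ⟨_, rfl⟩
  | lam y b => exact Or.inl ⟨_, rfl⟩
  | app a b =>
    right; left
    simp only [cbv]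
    rcases h : cbv a with _ | _ | _ | _ | _ <;> exact ⟨_, _, rfl⟩
  | op o f => exact Or.inr (Or.inr ⟨_, _, rfl⟩)

/-- Substitution lemma for the CbN and CbV translations. -/
theorem substitution_lemma {O : Type} {ar : O → ℕ} (t u : Lam O ar) (x : ℕ) :
    (BT.subst (cbn t) x (cbn u) = cbn (Lam.subst t x u)) ∧
    (∀ S : BT O ar, cbv u = BT.bang S → BT.subst (cbv t) x S = cbv (Lam.subst t x u)) := by
  induction t with
  | var y =>
    constructor
    · simp only [cbn, BT.subst, Lam.subst]
      split <;> simp [cbn]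
    · intro S hS
      simp only [cbv, BT.subst, Lam.subst]
      split
      · rw [← hS]
      · simp [cbv]
  | lam y b ih =>
    constructor
    · simp only [cbn, BT.subst, Lam.subst]
      split <;> simp [cbn, ih.1]
    · intro S hS
      simp only [cbv, BT.subst, Lam.subst]
      split <;> simp [cbv, ih.2 S hS]
  | app a b iha ihb =>
    constructor
    · simp [cbn, BT.subst, Lam.subst, iha.1, ihb.1]
    · intro S hS
      have ha := iha.2 S hS
      have hb := ihb.2 S hS
      simp only [Lam.subst]
      rcases cbv_shape a with ⟨T, hT⟩ | ⟨A, B, hAB⟩ | ⟨o, f, hf⟩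
      · rw [hT] at ha; simp only [BT.subst] at ha
        simp only [cbv, hT, ← ha, BT.subst, hb]
      · rw [hAB] at ha; simp only [BT.subst] at ha
        simp only [cbv, hAB, ← ha, BT.subst, hb, der_subst]
      · rw [hf] at ha; simp only [BT.subst] at ha
        simp only [cbv, hf, ← ha, BT.subst, hb, der_subst]
  | op o ts ih =>
    constructor
    · simp only [cbn, BT.subst, Lam.subst, BT.op.injEq, heq_eq_eq, true_and]
      funext i; exact (ih i).1
    · intro S hS
      simp only [cbv, BT.subst, Lam.subst, BT.op.injEq, heq_eq_eq, true_and]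
      funext i; exact (ih i).2 S hS


end BangPaper
end

section
/- Simulation of CbN in the bang calculus: for every λ-term t and operator o ∈ O: (soundness) if t →β t' then t^n →!β t'^n, and if t →o t' then t^n →o t'^n; (completeness) if t^n →!β S then there is a λ-term t' with S = t'^n and t →β t', and if t^n →o S then there is a λ-term t' with S = t'^n and t →o t'. -/
namespace BangPaper

variable {O : Type} {ar : O → ℕ}

lemma cbn_subst (t : Lam O ar) (x : ℕ) (u : Lam O ar) :
    cbn (Lam.subst t x u) = BT.subst (cbn t) x (cbn u) := by
  induction t with
  | var y => simp [Lam.subst, cbn, BT.subst]; split <;> simp [cbn]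
  | lam y t ih => simp [Lam.subst, cbn, BT.subst]; split <;> simp [cbn, ih]
  | app t s iht ihs => simp [Lam.subst, cbn, BT.subst, iht, ihs]
  | op o ts ih => simp [Lam.subst, cbn, BT.subst]; funext i; exact ih i

lemma cbn_plug (c : LCtx O ar) (t : Lam O ar) :
    cbn (c.plug t) = (cbnCtx c).plug (cbn t) := by
  induction c with
  | hole => rfl
  | lam x c ih => simp [LCtx.plug, cbnCtx, BCtx.plug, cbn, ih]
  | appL c s ih => simp [LCtx.plug, cbnCtx, BCtx.plug, cbn, ih]
  | appR s c ih => simp [LCtx.plug, cbnCtx, BCtx.plug, cbn, ih]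
  | op o ts i c ih =>
      simp only [LCtx.plug, cbnCtx, BCtx.plug, cbn]
      congr 1
      funext j
      by_cases h : j = i
      · subst h; simp [ih]
      · simp [Function.update_of_ne h]

/-- Composition of λ-contexts. -/
def LCtx.comp : LCtx O ar → LCtx O ar → LCtx O ar
  | .hole, d => d
  | .lam x c, d => .lam x (LCtx.comp c d)
  | .appL c s, d => .appL (LCtx.comp c d) s
  | .appR s c, d => .appR s (LCtx.comp c d)
  | .op o ts i c, d => .op o ts i (LCtx.comp c d)

lemma LCtx.plug_comp (c d : LCtx O ar) (t : Lam O ar) :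
    (LCtx.comp c d).plug t = c.plug (d.plug t) := by
  induction c with
  | hole => rfl
  | lam x c ih => simp [LCtx.comp, LCtx.plug, ih]
  | appL c s ih => simp [LCtx.comp, LCtx.plug, ih]
  | appR s c ih => simp [LCtx.comp, LCtx.plug, ih]
  | op o ts i c ih => simp [LCtx.comp, LCtx.plug, ih]

lemma Lam.Step.lift {root : Lam O ar → Lam O ar → Prop} (c : LCtx O ar)
    {t s : Lam O ar} (h : Lam.Step root t s) :
    Lam.Step root (c.plug t) (c.plug s) := by
  obtain ⟨d, a, b, hr, ht, hs⟩ := h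
  exact ⟨LCtx.comp c d, a, b, hr, by rw [LCtx.plug_comp, ht],
    by rw [LCtx.plug_comp, hs]⟩

lemma cbn_ne_bang (t : Lam O ar) (S : BT O ar) : cbn t ≠ BT.bang S := by
  cases t <;> simp [cbn]

/-- Generic completeness of the CbN translation for a root rule whose
left-hand sides are never bangs and which reflects along `cbn` at the root. -/
lemma cbn_complete_aux {Rb : BT O ar → BT O ar → Prop}
    {Rl : Lam O ar → Lam O ar → Prop}
    (hnb : ∀ A B, Rb A B → ∀ S, A ≠ BT.bang S)
    (hroot : ∀ t B, Rb (cbn t) B → ∃ t', B = cbn t' ∧ Rl t t') :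
    ∀ (t : Lam O ar) (C : BCtx O ar) (A B : BT O ar), Rb A B →
      cbn t = C.plug A → ∃ t', C.plug B = cbn t' ∧ Lam.Step Rl t t' := by
  intro t
  induction t with
  | var y =>
      intro C A B hr ht
      cases C with
      | hole =>
          obtain ⟨t', hB, hRl⟩ := hroot (.var y) B (by rwa [ht])
          exact ⟨t', hB, ⟨.hole, _, t', hRl, rfl, rfl⟩⟩
      | lam x C => simp [cbn, BCtx.plug] at ht
      | appL C s => simp [cbn, BCtx.plug] at ht
      | appR s C => simp [cbn, BCtx.plug] at ht
      | bang C => simp [cbn, BCtx.plug] at ht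
      | op o' Ts i C => simp [cbn, BCtx.plug] at ht
  | lam y u ih =>
      intro C A B hr ht
      cases C with
      | hole =>
          obtain ⟨t', hB, hRl⟩ := hroot (.lam y u) B (by rwa [ht])
          exact ⟨t', hB, ⟨.hole, _, t', hRl, rfl, rfl⟩⟩
      | lam x C =>
          simp only [cbn, BCtx.plug, BT.lam.injEq] at ht
          obtain ⟨rfl, hu⟩ := ht
          obtain ⟨t', ht', hstep⟩ := ih C A B hr hu
          exact ⟨.lam y t', by simp [cbn, BCtx.plug, ht'],
            Lam.Step.lift (.lam y .hole) hstep⟩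
      | appL C s => simp [cbn, BCtx.plug] at ht
      | appR s C => simp [cbn, BCtx.plug] at ht
      | bang C => simp [cbn, BCtx.plug] at ht
      | op o' Ts i C => simp [cbn, BCtx.plug] at ht
  | app t1 t2 ih1 ih2 =>
      intro C A B hr ht
      cases C with
      | hole =>
          obtain ⟨t', hB, hRl⟩ := hroot (.app t1 t2) B (by rwa [ht])
          exact ⟨t', hB, ⟨.hole, _, t', hRl, rfl, rfl⟩⟩
      | lam x C => simp [cbn, BCtx.plug] at ht
      | appL C s =>
          simp only [cbn, BCtx.plug, BT.app.injEq] at ht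
          obtain ⟨h1, h2⟩ := ht
          obtain ⟨t', ht', hstep⟩ := ih1 C A B hr h1
          exact ⟨.app t' t2, by simp [cbn, BCtx.plug, ht', h2],
            Lam.Step.lift (.appL .hole t2) hstep⟩
      | appR s C =>
          simp only [cbn, BCtx.plug, BT.app.injEq] at ht
          obtain ⟨h1, h2⟩ := ht
          cases C with
          | hole => exact absurd h2.symm (hnb A B hr (cbn t2))
          | bang C =>
              simp only [BCtx.plug, BT.bang.injEq] at h2
              obtain ⟨t', ht', hstep⟩ := ih2 C A B hr h2
              refine ⟨.app t1 t', ?_, Lam.Step.lift (.appR t1 .hole) hstep⟩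
              simp [cbn, BCtx.plug, ht', h1]
          | lam x C => simp [BCtx.plug] at h2
          | appL C u => simp [BCtx.plug] at h2
          | appR u C => simp [BCtx.plug] at h2
          | op o' Ts i C => simp [BCtx.plug] at h2
      | bang C => simp [cbn, BCtx.plug] at ht
      | op o' Ts i C => simp [cbn, BCtx.plug] at ht
  | op o'' us ih =>
      intro C A B hr ht
      cases C with
      | hole =>
          obtain ⟨t', hB, hRl⟩ := hroot (.op o'' us) B (by rwa [ht])
          exact ⟨t', hB, ⟨.hole, _, t', hRl, rfl, rfl⟩⟩
      | lam x C => simp [cbn, BCtx.plug] at ht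
      | appL C s => simp [cbn, BCtx.plug] at ht
      | appR s C => simp [cbn, BCtx.plug] at ht
      | bang C => simp [cbn, BCtx.plug] at ht
      | op o' Ts i C =>
          simp only [cbn, BCtx.plug] at ht
          injection ht with ho hfun
          subst ho
          have hfun' : (fun j => cbn (us j)) = Function.update Ts i (C.plug A) :=
            eq_of_heq hfun
          have hi : cbn (us i) = C.plug A := by
            have := congrFun hfun' i
            simpa using this
          obtain ⟨t', ht', hstep⟩ := ih i C A B hr hi
          refine ⟨.op o'' (Function.update us i t'), ?_, ?_⟩
          · simp only [cbn, BCtx.plug]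
            congr 1
            funext j
            by_cases h : j = i
            · subst h; simp [ht']
            · have := congrFun hfun' j
              simp [Function.update_of_ne h] at this ⊢
              exact this.symm
          · obtain ⟨c, a, b, hrl, ha, hb⟩ := hstep
            refine ⟨.op o'' us i c, a, b, hrl, ?_, ?_⟩
            · simp [LCtx.plug, ← ha, Function.update_eq_self]
            · simp [LCtx.plug, ← hb]

lemma cbn_sound_aux {Rb : BT O ar → BT O ar → Prop}
    {Rl : Lam O ar → Lam O ar → Prop}
    (hroot : ∀ a b, Rl a b → Rb (cbn a) (cbn b)) {t t' : Lam O ar}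
    (h : Lam.Step Rl t t') : BT.Step Rb (cbn t) (cbn t') := by
  obtain ⟨c, a, b, hr, ht, ht'⟩ := h
  exact ⟨cbnCtx c, cbn a, cbn b, hroot a b hr, by rw [ht, cbn_plug],
    by rw [ht', cbn_plug]⟩

/-- Simulation of CbN in the bang calculus: soundness and completeness for
`→β` vs `→!β` and for each operator rule `→o`, via the CbN translation.
The operator rule is given both on λ-terms (`lamRule`) and on bang-terms
(`bangRule`, the corresponding rule), with left-hand sides of shape `o(...)`,
and the two rules correspond to each other under the CbN translation. -/
theorem cbn_simulation {O : Type} {ar : O → ℕ} (o : O)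
    (lamRule : Lam O ar → Lam O ar → Prop) (bangRule : BT O ar → BT O ar → Prop)
    (hshapeL : ∀ a b, lamRule a b → ∃ ts, a = Lam.op o ts)
    (hshapeB : ∀ a b, bangRule a b → ∃ Ts, a = BT.op o Ts)
    (hsound : ∀ a b, lamRule a b → bangRule (cbn a) (cbn b))
    (hcomplete : ∀ a S, bangRule (cbn a) S → ∃ b, S = cbn b ∧ lamRule a b) :
    (∀ t t' : Lam O ar, Lam.Step betaRoot t t' → BT.Step bbetaRoot (cbn t) (cbn t')) ∧
    (∀ t t' : Lam O ar, Lam.Step lamRule t t' → BT.Step bangRule (cbn t) (cbn t')) ∧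
    (∀ (t : Lam O ar) (S : BT O ar), BT.Step bbetaRoot (cbn t) S →
      ∃ t', S = cbn t' ∧ Lam.Step betaRoot t t') ∧
    (∀ (t : Lam O ar) (S : BT O ar), BT.Step bangRule (cbn t) S →
      ∃ t', S = cbn t' ∧ Lam.Step lamRule t t') := by
  have hbetaroot : ∀ (t : Lam O ar) (B : BT O ar), bbetaRoot (cbn t) B →
      ∃ t', B = cbn t' ∧ betaRoot t t' := by
    intro t B hr
    obtain ⟨x, T, S, hA, hB⟩ := hr
    cases t with
    | var y => simp [cbn] at hA
    | lam y u => simp [cbn] at hA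
    | op o' ts => simp [cbn] at hA
    | app t1 t2 =>
        simp only [cbn, BT.app.injEq] at hA
        obtain ⟨h1, h2⟩ := hA
        cases t1 with
        | var y => simp [cbn] at h1
        | app u1 u2 => simp [cbn] at h1
        | op o' ts => simp [cbn] at h1
        | lam y u =>
            simp only [cbn, BT.lam.injEq] at h1
            obtain ⟨rfl, hu⟩ := h1
            simp only [BT.bang.injEq] at h2
            refine ⟨Lam.subst u y t2, ?_, ⟨y, u, t2, rfl, rfl⟩⟩
            rw [hB, cbn_subst, hu, h2]
  refine ⟨?_, ?_, ?_, ?_⟩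
  · exact fun t t' h => cbn_sound_aux (fun a b hr => by
      obtain ⟨x, u, s, ha, hb⟩ := hr
      exact ⟨x, cbn u, cbn s, by rw [ha]; rfl, by rw [hb, cbn_subst]⟩) h
  · exact fun t t' h => cbn_sound_aux hsound h
  · intro t S h
    obtain ⟨C, A, B, hr, ht, hS⟩ := h
    obtain ⟨t', ht', hstep⟩ := cbn_complete_aux
      (fun A B hr S => by obtain ⟨x, T, S', hA, _⟩ := hr; rw [hA]; simp)
      hbetaroot t C A B hr ht
    exact ⟨t', by rw [hS, ht'], hstep⟩
  · intro t S h
    obtain ⟨C, A, B, hr, ht, hS⟩ := h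
    obtain ⟨t', ht', hstep⟩ := cbn_complete_aux
      (fun A B hr S => by obtain ⟨Ts, hA⟩ := hshapeB A B hr; rw [hA]; simp)
      (fun t B hr => hcomplete t B hr) t C A B hr ht
    exact ⟨t', by rw [hS, ht'], hstep⟩

end BangPaper
end

section
/- Preservation of normal forms by the CbN and CbV translations: for every λ-term t and every operator o ∈ O: (CbN) t is →β-normal iff t^n is →!β-normal, and t is →o-normal iff t^n is →o-normal; (CbV) t is →βv-normal iff t^v is →!β-normal, and t is →o-normal iff t^v is →o-normal. -/
namespace BangPaper

variable {O : Type} {ar : O → ℕ}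

/-! ### Auxiliary: occurrences of subterms -/

/-- `a` occurs as a subterm of `t` (λ-terms). -/
inductive LOcc : Lam O ar → Lam O ar → Prop
  | refl (t) : LOcc t t
  | lam (x) {a t} : LOcc a t → LOcc a (Lam.lam x t)
  | appL {a t} (s) : LOcc a t → LOcc a (Lam.app t s)
  | appR (t) {a s} : LOcc a s → LOcc a (Lam.app t s)
  | op (o') (ts) (i) {a} : LOcc a (ts i) → LOcc a (Lam.op o' ts)

/-- `a` occurs as a subterm of `t` (bang-terms). -/
inductive BOcc : BT O ar → BT O ar → Prop
  | refl (t) : BOcc t t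
  | lam (x) {a t} : BOcc a t → BOcc a (BT.lam x t)
  | appL {a t} (s) : BOcc a t → BOcc a (BT.app t s)
  | appR (t) {a s} : BOcc a s → BOcc a (BT.app t s)
  | bang {a t} : BOcc a t → BOcc a (BT.bang t)
  | op (o') (ts) (i) {a} : BOcc a (ts i) → BOcc a (BT.op o' ts)

lemma locc_plug (c : LCtx O ar) (a : Lam O ar) : LOcc a (c.plug a) := by
  induction c with
  | hole => exact .refl a
  | lam x c ih => exact .lam x ih
  | appL c s ih => exact .appL s ih
  | appR s c ih => exact .appR s ih
  | op o' ts i c ih =>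
    refine LOcc.op o' _ i ?_
    rw [Function.update_self]
    exact ih

lemma locc_exists {a t : Lam O ar} (h : LOcc a t) : ∃ c : LCtx O ar, t = c.plug a := by
  induction h with
  | refl t => exact ⟨.hole, rfl⟩
  | lam x _ ih => obtain ⟨c, rfl⟩ := ih; exact ⟨.lam x c, rfl⟩
  | appL s _ ih => obtain ⟨c, rfl⟩ := ih; exact ⟨.appL c s, rfl⟩
  | appR s _ ih => obtain ⟨c, rfl⟩ := ih; exact ⟨.appR s c, rfl⟩
  | op o' ts i _ ih =>
    obtain ⟨c, hc⟩ := ih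
    exact ⟨.op o' ts i c, by simp [LCtx.plug, ← hc, Function.update_eq_self]⟩

lemma bocc_plug (c : BCtx O ar) (a : BT O ar) : BOcc a (c.plug a) := by
  induction c with
  | hole => exact .refl a
  | lam x c ih => exact .lam x ih
  | appL c s ih => exact .appL s ih
  | appR s c ih => exact .appR s ih
  | bang c ih => exact .bang ih
  | op o' ts i c ih =>
    refine BOcc.op o' _ i ?_
    rw [Function.update_self]
    exact ih

lemma bocc_exists {a t : BT O ar} (h : BOcc a t) : ∃ c : BCtx O ar, t = c.plug a := by
  induction h with
  | refl t => exact ⟨.hole, rfl⟩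
  | lam x _ ih => obtain ⟨c, rfl⟩ := ih; exact ⟨.lam x c, rfl⟩
  | appL s _ ih => obtain ⟨c, rfl⟩ := ih; exact ⟨.appL c s, rfl⟩
  | appR s _ ih => obtain ⟨c, rfl⟩ := ih; exact ⟨.appR s c, rfl⟩
  | bang _ ih => obtain ⟨c, rfl⟩ := ih; exact ⟨.bang c, rfl⟩
  | op o' ts i _ ih =>
    obtain ⟨c, hc⟩ := ih
    exact ⟨.op o' ts i c, by simp [BCtx.plug, ← hc, Function.update_eq_self]⟩

lemma normalL_iff (root : Lam O ar → Lam O ar → Prop) (t : Lam O ar) :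
    Normal (Lam.Step root) t ↔ ∀ a b, root a b → ¬ LOcc a t := by
  constructor
  · rintro h a b hr hocc
    obtain ⟨c, rfl⟩ := locc_exists hocc
    exact h (c.plug b) ⟨c, a, b, hr, rfl, rfl⟩
  · rintro h s ⟨c, a, b, hr, rfl, rfl⟩
    exact h a b hr (locc_plug c a)

lemma normalB_iff (root : BT O ar → BT O ar → Prop) (t : BT O ar) :
    Normal (BT.Step root) t ↔ ∀ a b, root a b → ¬ BOcc a t := by
  constructor
  · rintro h a b hr hocc
    obtain ⟨c, rfl⟩ := bocc_exists hocc
    exact h (c.plug b) ⟨c, a, b, hr, rfl, rfl⟩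
  · rintro h s ⟨c, a, b, hr, rfl, rfl⟩
    exact h a b hr (bocc_plug c a)

/-! ### Auxiliary: structure of translated terms -/

lemma cbv_app_cases (t1 t2 : Lam O ar) :
    (∃ T, cbv t1 = BT.bang T ∧ cbv (Lam.app t1 t2) = BT.app T (cbv t2)) ∨
    ((∀ U, cbv t1 ≠ BT.bang U) ∧
      cbv (Lam.app t1 t2) = BT.app (BT.app der (cbv t1)) (cbv t2)) := by
  have e : cbv (Lam.app t1 t2) = (match cbv t1 with
      | .bang T => BT.app T (cbv t2)
      | T => BT.app (BT.app der T) (cbv t2)) := rfl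
  rw [e]
  generalize cbv t1 = X
  cases X with
  | bang T => exact Or.inl ⟨T, rfl, rfl⟩
  | var x => exact Or.inr ⟨by simp, rfl⟩
  | lam x T => exact Or.inr ⟨by simp, rfl⟩
  | app T S => exact Or.inr ⟨by simp, rfl⟩
  | op o' Ts => exact Or.inr ⟨by simp, rfl⟩

lemma cbv_app_ne_bang (t1 t2 : Lam O ar) (U : BT O ar) :
    cbv (Lam.app t1 t2) ≠ BT.bang U := by
  rcases cbv_app_cases t1 t2 with ⟨T, _, h⟩ | ⟨_, h⟩ <;> rw [h] <;> simp

/-- Classification of the subterms of `cbn t`. -/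
def CbnOcc (t : Lam O ar) (A : BT O ar) : Prop :=
  (∃ s, LOcc s t ∧ A = cbn s) ∨ (∃ s, LOcc s t ∧ A = BT.bang (cbn s))

lemma CbnOcc.mono {t t' : Lam O ar} {A : BT O ar}
    (hlift : ∀ s, LOcc s t → LOcc s t') : CbnOcc t A → CbnOcc t' A := by
  rintro (⟨s, hs, rfl⟩ | ⟨s, hs, rfl⟩)
  · exact Or.inl ⟨s, hlift s hs, rfl⟩
  · exact Or.inr ⟨s, hlift s hs, rfl⟩

lemma cbn_occ (t : Lam O ar) : ∀ A, BOcc A (cbn t) → CbnOcc t A := by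
  induction t with
  | var x =>
    intro A h
    cases h
    exact Or.inl ⟨.var x, .refl _, rfl⟩
  | lam x t ih =>
    intro A h
    cases h with
    | refl => exact Or.inl ⟨.lam x t, .refl _, rfl⟩
    | lam _ h => exact (ih A h).mono (fun s hs => .lam x hs)
  | app t1 t2 ih1 ih2 =>
    intro A h
    cases h with
    | refl => exact Or.inl ⟨.app t1 t2, .refl _, rfl⟩
    | appL _ h => exact (ih1 A h).mono (fun s hs => .appL t2 hs)
    | appR _ h =>
      cases h with
      | refl => exact Or.inr ⟨t2, .appR t1 (.refl _), rfl⟩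
      | bang h => exact (ih2 A h).mono (fun s hs => .appR t1 hs)
  | op o' ts ih =>
    intro A h
    cases h with
    | refl => exact Or.inl ⟨.op o' ts, .refl _, rfl⟩
    | op _ _ i h => exact (ih i A h).mono (fun s hs => .op o' ts i hs)

/-- Classification of the subterms of `cbv t`. -/
def CbvOcc (t : Lam O ar) (A : BT O ar) : Prop :=
  (∃ s, LOcc s t ∧ A = cbv s) ∨
  (∃ s x s', LOcc s t ∧ s = Lam.lam x s' ∧ A = BT.lam x (cbv s')) ∨
  (∃ x, A = BT.var x) ∨
  (∃ s, A = BT.app der (cbv s) ∧ ∀ U, cbv s ≠ BT.bang U) ∨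
  A = der

lemma CbvOcc.mono {t t' : Lam O ar} {A : BT O ar}
    (hlift : ∀ s, LOcc s t → LOcc s t') : CbvOcc t A → CbvOcc t' A := by
  rintro (⟨s, hs, rfl⟩ | ⟨s, x, s', hs, rfl, rfl⟩ | h | h | h)
  · exact Or.inl ⟨s, hlift s hs, rfl⟩
  · exact Or.inr (Or.inl ⟨_, x, s', hlift _ hs, rfl, rfl⟩)
  · exact Or.inr (Or.inr (Or.inl h))
  · exact Or.inr (Or.inr (Or.inr (Or.inl h)))
  · exact Or.inr (Or.inr (Or.inr (Or.inr h)))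

lemma cbv_occ (t : Lam O ar) : ∀ A, BOcc A (cbv t) → CbvOcc t A := by
  induction t with
  | var x =>
    intro A h
    cases h with
    | refl => exact Or.inl ⟨.var x, .refl _, rfl⟩
    | bang h =>
      cases h
      exact Or.inr (Or.inr (Or.inl ⟨x, rfl⟩))
  | lam x t ih =>
    intro A h
    cases h with
    | refl => exact Or.inl ⟨.lam x t, .refl _, rfl⟩
    | bang h =>
      cases h with
      | refl => exact Or.inr (Or.inl ⟨.lam x t, x, t, .refl _, rfl, rfl⟩)
      | lam _ h => exact (ih A h).mono (fun s hs => .lam x hs)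
  | app t1 t2 ih1 ih2 =>
    intro A h
    rcases cbv_app_cases t1 t2 with ⟨T, h1, heq⟩ | ⟨hne, heq⟩
    · rw [heq] at h
      cases h with
      | refl => exact Or.inl ⟨.app t1 t2, .refl _, heq.symm⟩
      | appL _ h =>
        exact (ih1 A (h1 ▸ BOcc.bang h)).mono (fun s hs => .appL t2 hs)
      | appR _ h => exact (ih2 A h).mono (fun s hs => .appR t1 hs)
    · rw [heq] at h
      cases h with
      | refl => exact Or.inl ⟨.app t1 t2, .refl _, heq.symm⟩
      | appL _ h =>
        cases h with
        | refl => exact Or.inr (Or.inr (Or.inr (Or.inl ⟨t1, rfl, hne⟩)))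
        | appL _ h =>
          cases h with
          | refl => exact Or.inr (Or.inr (Or.inr (Or.inr rfl)))
          | lam _ h =>
            cases h
            exact Or.inr (Or.inr (Or.inl ⟨0, rfl⟩))
        | appR _ h => exact (ih1 A h).mono (fun s hs => .appL t2 hs)
      | appR _ h => exact (ih2 A h).mono (fun s hs => .appR t1 hs)
  | op o' ts ih =>
    intro A h
    cases h with
    | refl => exact Or.inl ⟨.op o' ts, .refl _, rfl⟩
    | op _ _ i h => exact (ih i A h).mono (fun s hs => .op o' ts i hs)

lemma cbn_occ_of {a t : Lam O ar} (h : LOcc a t) : BOcc (cbn a) (cbn t) := by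
  induction h with
  | refl t => exact .refl _
  | lam x _ ih => exact .lam x ih
  | appL s _ ih => exact .appL _ ih
  | appR s _ ih => exact .appR _ (.bang ih)
  | op o' ts i _ ih => exact .op o' _ i ih

lemma bocc_bang_inv {A T : BT O ar} (h : BOcc A (BT.bang T)) :
    A = BT.bang T ∨ BOcc A T := by
  cases h with
  | refl => exact Or.inl rfl
  | bang h => exact Or.inr h

lemma cbv_occ_of {a t : Lam O ar} (h : LOcc a t) :
    (∀ U, cbv a ≠ BT.bang U) → BOcc (cbv a) (cbv t) := by
  induction h with
  | refl t => exact fun _ => .refl _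
  | lam x _ ih => exact fun hnb => .bang (.lam x (ih hnb))
  | appL s _ ih =>
    intro hnb
    rcases cbv_app_cases _ s with ⟨T, h1, heq⟩ | ⟨_, heq⟩
    · rw [heq]
      rcases bocc_bang_inv (h1 ▸ ih hnb) with h | h
      · exact absurd h (hnb T)
      · exact .appL _ h
    · rw [heq]
      exact .appL _ (.appR _ (ih hnb))
  | appR s _ ih =>
    intro hnb
    rcases cbv_app_cases s _ with ⟨T, h1, heq⟩ | ⟨_, heq⟩ <;> rw [heq] <;>
      exact .appR _ (ih hnb)
  | op o' ts i _ ih => exact fun hnb => .op o' _ i (ih hnb)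

lemma cbn_eq_app {s : Lam O ar} {X Y : BT O ar} (h : cbn s = BT.app X Y) :
    ∃ t1 t2, s = Lam.app t1 t2 ∧ cbn t1 = X ∧ BT.bang (cbn t2) = Y := by
  cases s with
  | app t1 t2 =>
    have h' : BT.app (cbn t1) (BT.bang (cbn t2)) = BT.app X Y := h
    injection h' with h1 h2
    exact ⟨t1, t2, rfl, h1, h2⟩
  | var x => exact absurd h (by simp [cbn])
  | lam x t => exact absurd h (by simp [cbn])
  | op o' ts => exact absurd h (by simp [cbn])

lemma cbn_eq_lam {s : Lam O ar} {x : ℕ} {T : BT O ar} (h : cbn s = BT.lam x T) :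
    ∃ t', s = Lam.lam x t' ∧ cbn t' = T := by
  cases s with
  | lam y t =>
    have h' : BT.lam y (cbn t) = BT.lam x T := h
    injection h' with h1 h2
    exact ⟨t, by rw [h1], h2⟩
  | var x => exact absurd h (by simp [cbn])
  | app t1 t2 => exact absurd h (by simp [cbn])
  | op o' ts => exact absurd h (by simp [cbn])

lemma cbv_value_bang {s : Lam O ar} {S : BT O ar} (h : cbv s = BT.bang S) :
    s.isValue := by
  cases s with
  | var x => trivial
  | lam x t => trivial
  | app t1 t2 => exact absurd h (cbv_app_ne_bang t1 t2 S)
  | op o' ts => exact absurd h (by intro h'; cases h')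

lemma value_cbv_bang {v : Lam O ar} (h : v.isValue) : ∃ V, cbv v = BT.bang V := by
  cases v with
  | var x => exact ⟨_, rfl⟩
  | lam x t => exact ⟨_, rfl⟩
  | app t1 t2 => exact absurd h (by simp [Lam.isValue])
  | op o' ts => exact absurd h (by simp [Lam.isValue])

lemma cbv_bbeta {s : Lam O ar} {x : ℕ} {T S : BT O ar}
    (h : cbv s = BT.app (BT.lam x T) (BT.bang S)) :
    ∃ t1 s2, s = Lam.app (Lam.lam x t1) s2 ∧ s2.isValue := by
  cases s with
  | var y => exact absurd h (by intro h'; cases h')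
  | lam y t => exact absurd h (by intro h'; cases h')
  | op o' ts => exact absurd h (by intro h'; cases h')
  | app t1 t2 =>
    rcases cbv_app_cases t1 t2 with ⟨T', h1, heq⟩ | ⟨hne, heq⟩
    · rw [heq] at h
      injection h with hL hR
      rw [hL] at h1
      cases t1 with
      | var y => exact absurd h1 (by intro h'; injection h' with h'; cases h')
      | app u1 u2 => exact absurd h1 (cbv_app_ne_bang u1 u2 _)
      | op o' ts => exact absurd h1 (by intro h'; cases h')
      | lam y t =>
        have h1' : BT.bang (BT.lam y (cbv t)) = BT.bang (BT.lam x T) := h1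
        injection h1' with h1'
        injection h1' with hxy _
        exact ⟨t, t2, by rw [hxy], cbv_value_bang hR⟩
    · rw [heq] at h
      injection h with hL _
      cases hL

lemma cbv_op_ne_bang (o' : O) (ts : Fin (ar o') → Lam O ar) (U : BT O ar) :
    cbv (Lam.op o' ts) ≠ BT.bang U := by
  intro h'; cases h'

/-- Preservation of normal forms by the CbN and CbV translations, for `β`/`βv`
and for each operator rule `o`. The operator rule is given both on λ-terms
(`lamRule`) and on bang-terms (`bangRule`, the corresponding rule), with
left-hand sides of shape `o(...)`, corresponding to each other under the
CbN and CbV translations. -/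
theorem preservation_normal_forms {O : Type} {ar : O → ℕ} (o : O)
    (lamRule : Lam O ar → Lam O ar → Prop) (bangRule : BT O ar → BT O ar → Prop)
    (hshapeL : ∀ a b, lamRule a b → ∃ ts, a = Lam.op o ts)
    (hshapeB : ∀ a b, bangRule a b → ∃ Ts, a = BT.op o Ts)
    (hsoundN : ∀ a b, lamRule a b → bangRule (cbn a) (cbn b))
    (hcompleteN : ∀ a S, bangRule (cbn a) S → ∃ b, S = cbn b ∧ lamRule a b)
    (hsoundV : ∀ a b, lamRule a b → bangRule (cbv a) (cbv b))
    (hcompleteV : ∀ a S, bangRule (cbv a) S → ∃ b, S = cbv b ∧ lamRule a b)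
    (t : Lam O ar) :
    -- CbN
    ((Normal (Lam.Step betaRoot) t ↔ Normal (BT.Step bbetaRoot) (cbn t)) ∧
     (Normal (Lam.Step lamRule) t ↔ Normal (BT.Step bangRule) (cbn t))) ∧
    -- CbV
    ((Normal (Lam.Step betavRoot) t ↔ Normal (BT.Step bbetaRoot) (cbv t)) ∧
     (Normal (Lam.Step lamRule) t ↔ Normal (BT.Step bangRule) (cbv t))) := by
  refine ⟨⟨?_, ?_⟩, ?_, ?_⟩
  · -- CbN, β
    rw [normalL_iff, normalB_iff]
    constructor
    · rintro h A B ⟨x, T, S, rfl, rfl⟩ hocc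
      rcases cbn_occ t _ hocc with ⟨s, hs, heq⟩ | ⟨s, hs, heq⟩
      · obtain ⟨t1, t2, rfl, h1, _⟩ := cbn_eq_app heq.symm
        obtain ⟨t1', rfl, _⟩ := cbn_eq_lam h1
        exact h _ _ ⟨x, t1', t2, rfl, rfl⟩ hs
      · cases heq
    · rintro h a b ⟨x, t1, s2, rfl, rfl⟩ hocc
      exact h (cbn (Lam.app (Lam.lam x t1) s2)) (BT.subst (cbn t1) x (cbn s2))
        ⟨x, cbn t1, cbn s2, rfl, rfl⟩ (cbn_occ_of hocc)
  · -- CbN, o-rule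
    rw [normalL_iff, normalB_iff]
    constructor
    · rintro h A B hr hocc
      obtain ⟨Ts, rfl⟩ := hshapeB A B hr
      rcases cbn_occ t _ hocc with ⟨s, hs, heq⟩ | ⟨s, hs, heq⟩
      · obtain ⟨b, _, hb⟩ := hcompleteN s B (heq ▸ hr)
        exact h s b hb hs
      · cases heq
    · rintro h a b hr hocc
      exact h (cbn a) (cbn b) (hsoundN a b hr) (cbn_occ_of hocc)
  · -- CbV, βv
    rw [normalL_iff, normalB_iff]
    constructor
    · rintro h A B ⟨x, T, S, rfl, rfl⟩ hocc
      rcases cbv_occ t _ hocc with ⟨s, hs, heq⟩ | ⟨s, y, s', _, _, heq⟩ |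
        ⟨y, heq⟩ | ⟨s, heq, hne⟩ | heq
      · obtain ⟨t1, s2, rfl, hval⟩ := cbv_bbeta heq.symm
        exact h _ _ ⟨x, t1, s2, hval, rfl, rfl⟩ hs
      · cases heq
      · cases heq
      · injection heq with _ h2
        exact hne S h2.symm
      · cases heq
    · rintro h a b ⟨x, t1, v, hval, rfl, rfl⟩ hocc
      obtain ⟨V, hV⟩ := value_cbv_bang hval
      refine h (cbv (Lam.app (Lam.lam x t1) v)) (BT.subst (cbv t1) x V)
        ⟨x, cbv t1, V, ?_, rfl⟩ (cbv_occ_of hocc (cbv_app_ne_bang _ _))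
      rcases cbv_app_cases (Lam.lam x t1) v with ⟨T, h1, heq⟩ | ⟨hne, _⟩
      · rw [heq, hV]
        have h1' : BT.bang (BT.lam x (cbv t1)) = BT.bang T := h1
        injection h1' with h1'
        rw [h1']
      · exact absurd rfl (hne (BT.lam x (cbv t1)))
  · -- CbV, o-rule
    rw [normalL_iff, normalB_iff]
    constructor
    · rintro h A B hr hocc
      obtain ⟨Ts, rfl⟩ := hshapeB A B hr
      rcases cbv_occ t _ hocc with ⟨s, hs, heq⟩ | ⟨s, y, s', _, _, heq⟩ |
        ⟨y, heq⟩ | ⟨s, heq, hne⟩ | heq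
      · obtain ⟨b, _, hb⟩ := hcompleteV s B (heq ▸ hr)
        exact h s b hb hs
      · cases heq
      · cases heq
      · cases heq
      · cases heq
    · rintro h a b hr hocc
      obtain ⟨ts, rfl⟩ := hshapeL a b hr
      exact h _ _ (hsoundV _ b hr) (cbv_occ_of hocc (cbv_op_ne_bang o ts))

end BangPaper
end
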